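/- Let V = ℝ^{2n} with the standard symplectic form ω. For any two subspaces W₁, W₂ ≤ V there exists h ∈ Sp(V,ω) such that h(W₁) and W₂ are in general position; explicitly, h(W₁) ∩ W₂ = {0} if dim W₁ + dim W₂ ≤ 2n, and h(W₁) + W₂ = V if dim W₁ + dim W₂ ≥ 2n. -/

import Mathlib

/-- The standard symplectic form `ω` on `V = ℝ^{2n}`. -/
noncomputable def stdSymplectic (n : ℕ) :
    LinearMap.BilinForm ℝ ((Fin n ⊕ Fin n) → ℝ) :=
  Matrix.toBilin' (Matrix.fromBlocks 0 1 (-1) 0)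

namespace StdSymp

abbrev EV (n : ℕ) := (Fin n ⊕ Fin n) → ℝ

lemma std_apply (n : ℕ) (v w : EV n) :
    stdSymplectic n v w = ∑ i, v (Sum.inl i) * w (Sum.inr i) - ∑ i, v (Sum.inr i) * w (Sum.inl i) := by
  simp only [stdSymplectic, Matrix.toBilin'_apply', Matrix.fromBlocks, dotProduct,
    Matrix.mulVec, Fintype.sum_sum_type, Matrix.one_apply, Finset.mul_sum, mul_comm,
    sub_eq_add_neg, Matrix.of_apply, Sum.elim_inl, Sum.elim_inr, Matrix.zero_apply,
    Matrix.neg_apply, Pi.zero_apply]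
  congr 1
  · apply Finset.sum_congr rfl; intro x _
    simp [Finset.mul_sum, Matrix.one_apply, mul_comm, Finset.sum_ite_eq]
  · rw [← Finset.sum_neg_distrib]
    apply Finset.sum_congr rfl; intro x _
    simp [Finset.mul_sum, Matrix.one_apply, mul_comm, apply_ite Neg.neg, Finset.sum_ite_eq]

lemma std_alt (n : ℕ) : (stdSymplectic n).IsAlt := by
  intro v; rw [std_apply]; simp [mul_comm]

lemma std_nondeg (n : ℕ) : (stdSymplectic n).Nondegenerate := by
  refine LinearMap.BilinForm.Nondegenerate.ofSeparatingLeft ?_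
  intro v hv
  funext i
  rcases i with i | i
  · have := hv (Pi.single (Sum.inr i) 1)
    rw [std_apply] at this
    simpa [Pi.single_apply] using this
  · have := hv (Pi.single (Sum.inl i) 1)
    rw [std_apply] at this
    simpa [Pi.single_apply] using this

lemma finrank_EV (n : ℕ) : Module.finrank ℝ (EV n) = 2 * n := by
  simp [Module.finrank_pi]; ring

/-- symplectic transvection -/
noncomputable def tv (n : ℕ) (u : EV n) : EV n ≃ₗ[ℝ] EV n :=
  LinearEquiv.ofLinear
    (LinearMap.id + ((stdSymplectic n).flip u).smulRight u)
    (LinearMap.id - ((stdSymplectic n).flip u).smulRight u)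
    (by
      ext x
      simp [map_sub, map_smul, (std_alt n) u, sub_smul, smul_smul, add_smul])
    (by
      ext x
      simp [map_add, map_smul, (std_alt n) u, sub_smul, smul_smul, add_smul])

lemma tv_apply (n : ℕ) (u x : EV n) : tv n u x = x + stdSymplectic n x u • u := rfl

lemma tv_symp (n : ℕ) (u : EV n) (x y : EV n) :
    stdSymplectic n (tv n u x) (tv n u y) = stdSymplectic n x y := by
  have halt := std_alt n
  rw [tv_apply, tv_apply]
  simp only [map_add, map_smul, LinearMap.add_apply, LinearMap.smul_apply, smul_eq_mul]
  rw [halt u, ← (std_alt n).neg_eq u y]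
  ring

/-- a vector outside two proper subspaces -/
lemma exists_notMem (V : Type*) [AddCommGroup V] [Module ℝ V] (p q : Submodule ℝ V)
    (hp : p ≠ ⊤) (hq : q ≠ ⊤) : ∃ u, u ∉ p ∧ u ∉ q := by
  have h1 : ¬ ∀ x, x ∈ p := fun h => hp (Submodule.eq_top_iff'.2 h)
  have h2 : ¬ ∀ x, x ∈ q := fun h => hq (Submodule.eq_top_iff'.2 h)
  push_neg at h1 h2
  obtain ⟨b, hb⟩ := h1
  obtain ⟨c, hc⟩ := h2
  by_cases hbq : b ∉ q
  · exact ⟨b, hb, hbq⟩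
  by_cases hcp : c ∉ p
  · exact ⟨c, hcp, hc⟩
  push_neg at hbq hcp
  refine ⟨b + c, fun h => hb ?_, fun h => hc ?_⟩
  · simpa using p.sub_mem h hcp
  · simpa using q.sub_mem h hbq

open Module Submodule

lemma core (n : ℕ) (k : ℕ) : ∀ (U W : Submodule ℝ (EV n)),
    finrank ℝ U + finrank ℝ W ≤ 2 * n → finrank ℝ (U ⊓ W : Submodule ℝ (EV n)) = k →
    ∃ h : EV n ≃ₗ[ℝ] EV n,
      (∀ v w, stdSymplectic n (h v) (h w) = stdSymplectic n v w) ∧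
      U.map (h : EV n →ₗ[ℝ] EV n) ⊓ W = ⊥ := by
  induction k using Nat.strong_induction_on with
  | _ k IH =>
  intro U W hle hk
  rcases Nat.eq_zero_or_pos k with hk0 | hkpos
  · refine ⟨LinearEquiv.refl ℝ (EV n), fun v w => rfl, ?_⟩
    rw [show ((LinearEquiv.refl ℝ (EV n)) : EV n →ₗ[ℝ] EV n) = LinearMap.id from rfl,
      Submodule.map_id]
    exact Submodule.finrank_eq_zero.mp (hk0 ▸ hk)
  -- inductive step
  set K : Submodule ℝ (EV n) := U ⊓ W with hK
  have hfinV : finrank ℝ (EV n) = 2 * n := finrank_EV n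
  have hsum : finrank ℝ (U ⊔ W : Submodule ℝ (EV n)) + k =
      finrank ℝ U + finrank ℝ W := by
    rw [← hk]; exact Submodule.finrank_sup_add_finrank_inf_eq U W
  have hUW : (U ⊔ W : Submodule ℝ (EV n)) ≠ ⊤ := by
    intro h
    rw [h, finrank_top, hfinV] at hsum
    omega
  have hKorth : (stdSymplectic n).orthogonal K ≠ ⊤ := by
    intro h
    have := LinearMap.BilinForm.finrank_orthogonal (std_nondeg n) K
    rw [h, finrank_top, hfinV, hk] at this
    have hkle : k ≤ 2 * n := by
      rw [← hk, ← hfinV]; exact Submodule.finrank_le K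
    omega
  obtain ⟨u, huUW, huK⟩ := exists_notMem (EV n) _ _ hUW hKorth
  -- the vector in K not orthogonal to u
  rw [LinearMap.BilinForm.mem_orthogonal_iff] at huK
  push_neg at huK
  obtain ⟨v, hvK, hvu⟩ := huK
  -- the new intersection is contained in K' := K ⊓ ker (ω · u)
  set T := tv n u with hT
  have hsub : U.map (T : EV n →ₗ[ℝ] EV n) ⊓ W ≤
      K ⊓ LinearMap.ker ((stdSymplectic n).flip u) := by
    rintro x ⟨hx1, hx2⟩
    obtain ⟨y, hyU, rfl⟩ := hx1
    have hTy : (T : EV n →ₗ[ℝ] EV n) y = y + stdSymplectic n y u • u := rfl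
    have hc : stdSymplectic n y u = 0 := by
      by_contra hc
      apply huUW
      have : u = (stdSymplectic n y u)⁻¹ • ((T : EV n →ₗ[ℝ] EV n) y - y) := by
        rw [hTy]; rw [add_sub_cancel_left, smul_smul, inv_mul_cancel₀ hc, one_smul]
      rw [this]
      exact Submodule.smul_mem _ _ (Submodule.sub_mem _
        (Submodule.mem_sup_right hx2) (Submodule.mem_sup_left hyU))
    have hxy : (T : EV n →ₗ[ℝ] EV n) y = y := by rw [hTy, hc, zero_smul, add_zero]
    refine ⟨⟨by rw [hxy]; exact hyU, hx2⟩, ?_⟩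
    exact LinearMap.mem_ker.mpr (by change stdSymplectic n ((T : EV n →ₗ[ℝ] EV n) y) u = 0; rw [hxy]; exact hc)
  have hlt : K ⊓ LinearMap.ker ((stdSymplectic n).flip u) < K := by
    refine lt_of_le_of_ne inf_le_left fun h => ?_
    have : v ∈ K ⊓ LinearMap.ker ((stdSymplectic n).flip u) := by rw [h]; exact hvK
    exact hvu (by simpa [LinearMap.mem_ker, LinearMap.flip_apply] using this.2)
  have hklt : finrank ℝ (U.map (T : EV n →ₗ[ℝ] EV n) ⊓ W : Submodule ℝ (EV n)) < k := by
    calc finrank ℝ (U.map (T : EV n →ₗ[ℝ] EV n) ⊓ W : Submodule ℝ (EV n))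
        ≤ finrank ℝ (K ⊓ LinearMap.ker ((stdSymplectic n).flip u) : Submodule ℝ (EV n)) :=
          Submodule.finrank_mono hsub
      _ < finrank ℝ K := Submodule.finrank_lt_finrank_of_lt hlt
      _ = k := hk
  have hle' : finrank ℝ (U.map (T : EV n →ₗ[ℝ] EV n)) + finrank ℝ W ≤ 2 * n := by
    rwa [LinearEquiv.finrank_map_eq]
  obtain ⟨h₁, h₁symp, h₁inf⟩ := IH _ hklt (U.map (T : EV n →ₗ[ℝ] EV n)) W hle' rfl
  refine ⟨T.trans h₁, fun a b => ?_, ?_⟩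
  · simp only [LinearEquiv.trans_apply]
    rw [h₁symp, tv_symp]
  · rwa [show ((T.trans h₁ : EV n →ₗ[ℝ] EV n)) =
      (h₁ : EV n →ₗ[ℝ] EV n).comp (T : EV n →ₗ[ℝ] EV n) from rfl, Submodule.map_comp]

lemma map_orth (n : ℕ) (h : EV n ≃ₗ[ℝ] EV n)
    (hs : ∀ v w, stdSymplectic n (h v) (h w) = stdSymplectic n v w) (W : Submodule ℝ (EV n)) :
    ((stdSymplectic n).orthogonal W).map (h : EV n →ₗ[ℝ] EV n) =
      (stdSymplectic n).orthogonal (W.map (h : EV n →ₗ[ℝ] EV n)) := by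
  ext x
  simp only [Submodule.mem_map, LinearMap.BilinForm.mem_orthogonal_iff,
    LinearMap.BilinForm.isOrtho_def]
  constructor
  · rintro ⟨y, hy, rfl⟩ m ⟨w, hw, rfl⟩
    rw [show ((h : EV n →ₗ[ℝ] EV n) w) = h w from rfl,
      show ((h : EV n →ₗ[ℝ] EV n) y) = h y from rfl, hs]
    exact hy w hw
  · intro hx
    refine ⟨h.symm x, fun w hw => ?_, by simp⟩
    have h2 := hx ((h : EV n →ₗ[ℝ] EV n) w) ⟨w, hw, rfl⟩
    rw [← hs w (h.symm x), h.apply_symm_apply]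
    exact h2

end StdSymp

open StdSymp Module Submodule

/-- For any two subspaces `W₁, W₂` of `ℝ^{2n}` there is `h ∈ Sp(V,ω)` such that
`h(W₁)` and `W₂` are in general position: `h(W₁) ∩ W₂ = 0` if
`dim W₁ + dim W₂ ≤ 2n`, and `h(W₁) + W₂ = V` if `dim W₁ + dim W₂ ≥ 2n`. -/
theorem stmt_4 (n : ℕ) (W₁ W₂ : Submodule ℝ ((Fin n ⊕ Fin n) → ℝ)) :
    ∃ h : ((Fin n ⊕ Fin n) → ℝ) ≃ₗ[ℝ] ((Fin n ⊕ Fin n) → ℝ),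
      (∀ v w, stdSymplectic n (h v) (h w) = stdSymplectic n v w) ∧
      (Module.finrank ℝ ↥W₁ + Module.finrank ℝ ↥W₂ ≤ 2 * n →
        W₁.map (h : ((Fin n ⊕ Fin n) → ℝ) →ₗ[ℝ] ((Fin n ⊕ Fin n) → ℝ)) ⊓ W₂ = ⊥) ∧
      (2 * n ≤ Module.finrank ℝ ↥W₁ + Module.finrank ℝ ↥W₂ →
        W₁.map (h : ((Fin n ⊕ Fin n) → ℝ) →ₗ[ℝ] ((Fin n ⊕ Fin n) → ℝ)) ⊔ W₂ = ⊤) := by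
  have hfin : finrank ℝ ((Fin n ⊕ Fin n) → ℝ) = 2 * n := finrank_EV n
  have hrefl := (std_alt n).isRefl
  have hnd := std_nondeg n
  rcases le_or_gt (finrank ℝ W₁ + finrank ℝ W₂) (2 * n) with hle | hlt
  · obtain ⟨h, hs, hinf⟩ := core n _ W₁ W₂ hle rfl
    refine ⟨h, hs, fun _ => hinf, fun hge => ?_⟩
    apply Submodule.eq_top_of_finrank_eq
    have hd := Submodule.finrank_sup_add_finrank_inf_eq
      (W₁.map (h : EV n →ₗ[ℝ] EV n)) W₂
    rw [hinf, finrank_bot, add_zero, LinearEquiv.finrank_map_eq] at hd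
    rw [hfin]
    exact hd.trans (le_antisymm hle hge)
    
  · have h1 : finrank ℝ ((stdSymplectic n).orthogonal W₁) = 2 * n - finrank ℝ W₁ := by
      rw [LinearMap.BilinForm.finrank_orthogonal hnd W₁, hfin]
    have h2 : finrank ℝ ((stdSymplectic n).orthogonal W₂) = 2 * n - finrank ℝ W₂ := by
      rw [LinearMap.BilinForm.finrank_orthogonal hnd W₂, hfin]
    have hb1 : finrank ℝ W₁ ≤ 2 * n := hfin ▸ Submodule.finrank_le W₁
    have hb2 : finrank ℝ W₂ ≤ 2 * n := hfin ▸ Submodule.finrank_le W₂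
    have hle' : finrank ℝ ((stdSymplectic n).orthogonal W₁) +
        finrank ℝ ((stdSymplectic n).orthogonal W₂) ≤ 2 * n := by omega
    obtain ⟨h, hs, hinf⟩ := core n _ ((stdSymplectic n).orthogonal W₁)
      ((stdSymplectic n).orthogonal W₂) hle' rfl
    refine ⟨h, hs, fun hle2 => absurd hle2 (not_le.2 hlt), fun _ => ?_⟩
    have hbot : (stdSymplectic n).orthogonal
        (W₁.map (h : EV n →ₗ[ℝ] EV n) ⊔ W₂) = ⊥ := by
      apply le_bot_iff.mp
      calc (stdSymplectic n).orthogonal (W₁.map (h : EV n →ₗ[ℝ] EV n) ⊔ W₂)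
          ≤ (stdSymplectic n).orthogonal (W₁.map (h : EV n →ₗ[ℝ] EV n)) ⊓
            (stdSymplectic n).orthogonal W₂ :=
            le_inf (LinearMap.BilinForm.orthogonal_le le_sup_left)
              (LinearMap.BilinForm.orthogonal_le le_sup_right)
        _ = ((stdSymplectic n).orthogonal W₁).map (h : EV n →ₗ[ℝ] EV n) ⊓
            (stdSymplectic n).orthogonal W₂ := by rw [map_orth n h hs W₁]
        _ = ⊥ := hinf
    have := LinearMap.BilinForm.orthogonal_orthogonal hnd hrefl
      (W₁.map (h : EV n →ₗ[ℝ] EV n) ⊔ W₂)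
    rw [hbot, LinearMap.BilinForm.orthogonal_bot] at this
    exact this.symm
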